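/- Under the FedAvg setting, the dynamic regret over T rounds satisfies Σ_{t=1}^T F^{(t)}(x^{(t)}) − Σ_{t=1}^T F^{(t)}(x^{(t),*}) ≤ (√T/2)·‖x^{(1)} − x^*‖² + (μ²·√T)/2 + 2·T·Δ_{[1,T]}. -/

import Mathlib

open Finset

/-- **FedAvg dynamic regret bound.**
Under the FedAvg setting (convex, differentiable local losses with `μ`-bounded gradients,
convex-combination weights summing to one, iterates produced by a gradient step with learning
rate `1/√T` followed by weighted aggregation, and concept drift `Δ_t` bounding the pointwise
change of the global loss between consecutive rounds), the dynamic regret over `T` rounds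
satisfies
`Σ_{t=1}^T F^{(t)}(x^{(t)}) − Σ_{t=1}^T F^{(t)}(x^{(t),*})
  ≤ (√T/2)·‖x^{(1)} − x^*‖² + (μ²·√T)/2 + 2·T·Δ_{[1,T]}`. -/

lemma grad_convex_ineq {E : Type*} [NormedAddCommGroup E] [InnerProductSpace ℝ E]
    [CompleteSpace E] {f : E → ℝ} {g x y : E}
    (hc : ConvexOn ℝ Set.univ f) (hg : HasGradientAt f g x) :
    f x + inner ℝ g (y - x) ≤ f y := by
  rcases eq_or_ne y x with rfl | hne
  · simp
  · set L : ℝ →ᵃ[ℝ] E := AffineMap.lineMap x y with hL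
    have hφc : ConvexOn ℝ Set.univ (f ∘ L) := by
      have := hc.comp_affineMap L
      simpa using this
    have hL0 : L 0 = x := by simp [hL]
    have hline : HasDerivAt (fun s : ℝ => L s) (y - x) 0 := by
      have h1 : (fun s : ℝ => L s) = fun s : ℝ => s • (y - x) + x := by
        funext s
        simp [hL, AffineMap.lineMap_apply_module]
        module
      rw [h1]
      simpa using ((hasDerivAt_id (0:ℝ)).smul_const (y - x)).add_const x
    have hd : HasDerivAt (f ∘ L) (inner ℝ g (y - x) : ℝ) 0 := by
      have := (hL0 ▸ hg.hasFDerivAt).comp_hasDerivAt 0 hline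
      simpa using this
    have := hφc.le_slope_of_hasDerivAt (Set.mem_univ 0) (Set.mem_univ 1) one_pos hd
    have hs : slope (f ∘ L) 0 1 = f y - f x := by
      simp [slope_def_field, hL]
    rw [hs] at this
    linarith

theorem fedavg_dynamic_regret
    {d : ℕ} {ι : Type*} (N : Finset ι) (T : ℕ) (hT : 1 ≤ T) (μ : ℝ) (hμ : 0 ≤ μ)
    (F : ℕ → ι → EuclideanSpace ℝ (Fin d) → ℝ)
    (G : ℕ → ι → EuclideanSpace ℝ (Fin d) → EuclideanSpace ℝ (Fin d))
    (p : ℕ → ι → ℝ)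
    (Fg : ℕ → EuclideanSpace ℝ (Fin d) → ℝ)
    (Δ : ℕ → ℝ)
    (x xstar : ℕ → EuclideanSpace ℝ (Fin d))
    (xs : EuclideanSpace ℝ (Fin d))
    (hconv : ∀ t ∈ Icc 1 T, ∀ n ∈ N, ConvexOn ℝ Set.univ (F t n))
    (hgrad : ∀ t ∈ Icc 1 T, ∀ n ∈ N, ∀ y, HasGradientAt (F t n) (G t n y) y)
    (hgradbd : ∀ t ∈ Icc 1 T, ∀ n ∈ N, ∀ y, ‖G t n y‖ ≤ μ)
    (hp0 : ∀ t ∈ Icc 1 T, ∀ n ∈ N, 0 ≤ p t n)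
    (hp1 : ∀ t ∈ Icc 1 T, ∀ n ∈ N, p t n ≤ 1)
    (hpsum : ∀ t ∈ Icc 1 T, ∑ n ∈ N, p t n = 1)
    (hFg : ∀ t ∈ Icc 1 T, ∀ y, Fg t y = ∑ n ∈ N, p t n * F t n y)
    (hΔ0 : ∀ t ∈ Icc 2 T, 0 ≤ Δ t)
    (hΔ : ∀ t ∈ Icc 2 T, ∀ y, |Fg t y - Fg (t - 1) y| ≤ Δ t)
    (hiter : ∀ t ∈ Icc 1 T,
      x (t + 1) = x t - (1 / Real.sqrt T) • ∑ n ∈ N, p t n • G t n (x t))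
    (hxstar : ∀ t ∈ Icc 1 T, ∀ y, Fg t (xstar t) ≤ Fg t y)
    (hxs : ∀ y, ∑ t ∈ Icc 1 T, Fg t xs ≤ ∑ t ∈ Icc 1 T, Fg t y) :
    ∑ t ∈ Icc 1 T, Fg t (x t) - ∑ t ∈ Icc 1 T, Fg t (xstar t) ≤
      (Real.sqrt T / 2) * ‖x 1 - xs‖ ^ 2 + μ ^ 2 * Real.sqrt T / 2
        + 2 * T * ∑ t ∈ Icc 2 T, Δ t := by
  have hTpos : (0:ℝ) < T := by exact_mod_cast hT
  have hsT : (0:ℝ) < Real.sqrt T := Real.sqrt_pos.mpr hTpos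
  set η : ℝ := 1 / Real.sqrt T with hηdef
  have hη : 0 < η := by positivity
  have hηT : η * Real.sqrt T = 1 := by
    rw [hηdef, one_div, inv_mul_cancel₀ hsT.ne']
  have hηTT : η * T = Real.sqrt T := by
    rw [hηdef]
    rw [div_mul_eq_mul_div, one_mul, eq_comm, eq_div_iff (ne_of_gt hsT)]
    exact Real.mul_self_sqrt hTpos.le
  set g : ℕ → EuclideanSpace ℝ (Fin d) := fun t => ∑ n ∈ N, p t n • G t n (x t) with hgdef
  set a : ℕ → ℝ := fun t => ‖x t - xs‖ ^ 2 with hadef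
  -- first-order inequality for the global loss
  have hfo : ∀ t ∈ Icc 1 T, ∀ z, Fg t (x t) - Fg t z ≤ inner ℝ (g t) (x t - z) := by
    intro t ht z
    rw [hFg t ht (x t), hFg t ht z, ← Finset.sum_sub_distrib]
    have hin : (inner ℝ (g t) (x t - z) : ℝ)
        = ∑ n ∈ N, p t n * inner ℝ (G t n (x t)) (x t - z) := by
      simp only [hgdef]
      rw [sum_inner]
      exact Finset.sum_congr rfl fun n _ => real_inner_smul_left _ _ _
    rw [hin]
    apply Finset.sum_le_sum
    intro n hn
    rw [← mul_sub]
    apply mul_le_mul_of_nonneg_left _ (hp0 t ht n hn)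
    have h := grad_convex_ineq (hconv t ht n hn) (hgrad t ht n hn (x t)) (y := z)
    have h2 : (inner ℝ (G t n (x t)) (z - x t) : ℝ) = - inner ℝ (G t n (x t)) (x t - z) := by
      rw [← inner_neg_right]
      congr 1
      abel
    rw [h2] at h
    linarith
  -- norm bound on the aggregated gradient
  have hgb : ∀ t ∈ Icc 1 T, ‖g t‖ ≤ μ := by
    intro t ht
    calc ‖g t‖ ≤ ∑ n ∈ N, ‖p t n • G t n (x t)‖ := norm_sum_le _ _
      _ ≤ ∑ n ∈ N, p t n * μ := by
          apply Finset.sum_le_sum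
          intro n hn
          rw [norm_smul, Real.norm_eq_abs, abs_of_nonneg (hp0 t ht n hn)]
          exact mul_le_mul_of_nonneg_left (hgradbd t ht n hn (x t)) (hp0 t ht n hn)
      _ = μ := by rw [← Finset.sum_mul, hpsum t ht, one_mul]
  -- descent identity
  have hdesc : ∀ t ∈ Icc 1 T,
      a (t + 1) = a t - 2 * η * inner ℝ (g t) (x t - xs) + η ^ 2 * ‖g t‖ ^ 2 := by
    intro t ht
    have h := hiter t ht
    have h' : x (t + 1) - xs = (x t - xs) - η • g t := by
      rw [h, hηdef, hgdef]
      abel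
    simp only [hadef]
    rw [h', norm_sub_sq_real, real_inner_smul_right, norm_smul, Real.norm_eq_abs,
      abs_of_pos hη, real_inner_comm]
    ring
  -- per-step regret bound vs fixed comparator xs
  have hstep : ∀ t ∈ Icc 1 T,
      Fg t (x t) - Fg t xs ≤ (a t - a (t + 1)) * (Real.sqrt T / 2) + μ ^ 2 * η / 2 := by
    intro t ht
    have h1 := hfo t ht xs
    have h2 := hdesc t ht
    have h3 : ‖g t‖ ^ 2 ≤ μ ^ 2 := by
      have := hgb t ht
      nlinarith [norm_nonneg (g t)]
    have hI : (inner ℝ (g t) (x t - xs) : ℝ)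
        = (a t - a (t + 1) + η ^ 2 * ‖g t‖ ^ 2) / (2 * η) := by
      rw [eq_div_iff (by positivity)]
      linear_combination h2
    calc Fg t (x t) - Fg t xs ≤ inner ℝ (g t) (x t - xs) := h1
      _ = (a t - a (t + 1)) / (2 * η) + η * ‖g t‖ ^ 2 / 2 := by
          rw [hI]; field_simp
      _ ≤ (a t - a (t + 1)) * (Real.sqrt T / 2) + μ ^ 2 * η / 2 := by
          have he : (a t - a (t + 1)) / (2 * η) = (a t - a (t + 1)) * (Real.sqrt T / 2) := by
            rw [hηdef]
            field_simp
          rw [he]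
          have h4 : η * ‖g t‖ ^ 2 / 2 ≤ μ ^ 2 * η / 2 := by nlinarith [hη.le]
          linarith
  -- telescoping
  have htel : ∑ t ∈ Icc 1 T, (a t - a (t + 1)) = a 1 - a (T + 1) := by
    rw [← Finset.Ico_add_one_right_eq_Icc, Finset.sum_Ico_eq_sum_range]
    have := Finset.sum_range_sub' (fun i => a (1 + i)) T
    simpa [add_comm, add_assoc, add_left_comm] using this
  -- static regret bound
  have hstatic : ∑ t ∈ Icc 1 T, Fg t (x t) - ∑ t ∈ Icc 1 T, Fg t xs ≤
      (Real.sqrt T / 2) * ‖x 1 - xs‖ ^ 2 + μ ^ 2 * Real.sqrt T / 2 := by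
    have hsum := Finset.sum_le_sum hstep
    rw [Finset.sum_sub_distrib] at hsum
    have hc : ∑ t ∈ Icc 1 T, ((a t - a (t + 1)) * (Real.sqrt T / 2) + μ ^ 2 * η / 2)
        = (a 1 - a (T + 1)) * (Real.sqrt T / 2) + (T : ℝ) * (μ ^ 2 * η / 2) := by
      rw [Finset.sum_add_distrib, ← Finset.sum_mul, htel, Finset.sum_const, Nat.card_Icc]
      simp
    rw [hc] at hsum
    have ha1 : a 1 = ‖x 1 - xs‖ ^ 2 := rfl
    have haT : 0 ≤ a (T + 1) := by positivity
    have hμη : (T : ℝ) * (μ ^ 2 * η / 2) = μ ^ 2 * Real.sqrt T / 2 := by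
      rw [← hηTT]; ring
    rw [hμη] at hsum
    nlinarith [hsT]
  -- drift bound
  set D : ℝ := ∑ t ∈ Icc 2 T, Δ t with hDdef
  have hD0 : 0 ≤ D := Finset.sum_nonneg hΔ0
  have hdrift : ∀ t ∈ Icc 1 T, ∀ z, |Fg t z - Fg 1 z| ≤ D := by
    intro t ht z
    obtain ⟨ht1, htT⟩ := Finset.mem_Icc.mp ht
    have key : Fg t z - Fg 1 z = ∑ i ∈ range (t - 1), (Fg (i + 1 + 1) z - Fg (i + 1) z) := by
      rw [Finset.sum_range_sub (fun i => Fg (i + 1) z)]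
      have : t - 1 + 1 = t := by omega
      rw [this]
    rw [key]
    calc |∑ i ∈ range (t - 1), (Fg (i + 1 + 1) z - Fg (i + 1) z)|
        ≤ ∑ i ∈ range (t - 1), |Fg (i + 1 + 1) z - Fg (i + 1) z| :=
          Finset.abs_sum_le_sum_abs _ _
      _ ≤ ∑ i ∈ range (t - 1), Δ (i + 2) := by
          apply Finset.sum_le_sum
          intro i hi
          have hiT : i + 2 ∈ Icc 2 T := by
            rw [Finset.mem_Icc]
            have := Finset.mem_range.mp hi
            omega
          have := hΔ (i + 2) hiT z
          have he : i + 2 - 1 = i + 1 := by omega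
          rw [he] at this
          convert this using 3 <;> omega
      _ ≤ D := by
          have he : ∑ i ∈ range (t - 1), Δ (i + 2) = ∑ s ∈ Icc 2 t, Δ s := by
            rw [← Finset.Ico_add_one_right_eq_Icc, Finset.sum_Ico_eq_sum_range]
            have h21 : t + 1 - 2 = t - 1 := by omega
            rw [h21]
            apply Finset.sum_congr rfl
            intro i _
            congr 1
            omega
          rw [he, hDdef]
          apply Finset.sum_le_sum_of_subset_of_nonneg (Finset.Icc_subset_Icc_right htT)
          intro s hs _
          exact hΔ0 s hs
  have h1T : (1 : ℕ) ∈ Icc 1 T := Finset.mem_Icc.mpr ⟨le_refl 1, hT⟩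
  have hcomp : ∀ t ∈ Icc 1 T, Fg t (xstar 1) ≤ Fg t (xstar t) + 2 * D := by
    intro t ht
    have h1 := abs_le.mp (hdrift t ht (xstar 1))
    have h2 := hxstar 1 h1T (xstar t)
    have h3 := abs_le.mp (hdrift t ht (xstar t))
    linarith [h1.1, h1.2, h3.1, h3.2]
  have hsum2 : ∑ t ∈ Icc 1 T, Fg t xs ≤ ∑ t ∈ Icc 1 T, Fg t (xstar t) + (T : ℝ) * (2 * D) := by
    calc ∑ t ∈ Icc 1 T, Fg t xs ≤ ∑ t ∈ Icc 1 T, Fg t (xstar 1) := hxs (xstar 1)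
      _ ≤ ∑ t ∈ Icc 1 T, (Fg t (xstar t) + 2 * D) := Finset.sum_le_sum hcomp
      _ = ∑ t ∈ Icc 1 T, Fg t (xstar t) + (T : ℝ) * (2 * D) := by
          rw [Finset.sum_add_distrib, Finset.sum_const, Nat.card_Icc]
          simp
  linarith [hstatic, hsum2]
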